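/- Under the homology ladder setup, for every integer k the Λ-linear map ψ : CX_k ⊕ BY_k → BX_k ⊕ CY_k defined by ψ(w̃, y) = (j_k w̃ + θ_k y, g_k w̃) is an isomorphism of Λ-modules. (Proposition 4.3 of the paper, abstracting the cross isomorphism H_k(W̃) ⊕ H_k(Y) ≅ H_k(X) ⊕ H_k(W).) -/

import Mathlib

open Function

/-- Proposition 4.3: under the homology ladder setup, the map
`ψ(w̃, y) = (j w̃ + θ y, g w̃)` is an isomorphism `CX_k ⊕ BY_k ≅ BX_k ⊕ CY_k`. -/
theorem homology_cross_isomorphism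
    (Λ : Type*) [CommRing Λ]
    (U BX BY CX CY : ℤ → Type*)
    [∀ k, AddCommGroup (U k)] [∀ k, Module Λ (U k)]
    [∀ k, AddCommGroup (BX k)] [∀ k, Module Λ (BX k)]
    [∀ k, AddCommGroup (BY k)] [∀ k, Module Λ (BY k)]
    [∀ k, AddCommGroup (CX k)] [∀ k, Module Λ (CX k)]
    [∀ k, AddCommGroup (CY k)] [∀ k, Module Λ (CY k)]
    (dX : ∀ k, U (k+1) →ₗ[Λ] CX k) (j : ∀ k, CX k →ₗ[Λ] BX k) (sX : ∀ k, BX k →ₗ[Λ] U k)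
    (dY : ∀ k, U (k+1) →ₗ[Λ] CY k) (i : ∀ k, CY k →ₗ[Λ] BY k) (sY : ∀ k, BY k →ₗ[Λ] U k)
    (hXex₁ : ∀ k, Function.Exact (dX k) (j k))
    (hXex₂ : ∀ k, Function.Exact (j k) (sX k))
    (hXex₃ : ∀ k, Function.Exact (sX (k+1)) (dX k))
    (hYex₁ : ∀ k, Function.Exact (dY k) (i k))
    (hYex₂ : ∀ k, Function.Exact (i k) (sY k))
    (hYex₃ : ∀ k, Function.Exact (sY (k+1)) (dY k))
    (g : ∀ k, CX k →ₗ[Λ] CY k) (f : ∀ k, BX k →ₗ[Λ] BY k)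
    (hgd : ∀ k, (g k).comp (dX k) = dY k)
    (hig : ∀ k, (i k).comp (g k) = (f k).comp (j k))
    (hsf : ∀ k, (sY k).comp (f k) = sX k)
    (η : ∀ k, CY k →ₗ[Λ] CX k) (θ : ∀ k, BY k →ₗ[Λ] BX k)
    (hηd : ∀ k, (η k).comp (dY k) = dX k)
    (hjη : ∀ k, (j k).comp (η k) = (θ k).comp (i k))
    (hsθ : ∀ k, (sX k).comp (θ k) = sY k)
    (hfθ : ∀ k, (f k).comp (θ k) = LinearMap.id)
    (hgη : ∀ k, (g k).comp (η k) = LinearMap.id)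
    (k : ℤ) :
    Function.Bijective
      ⇑(LinearMap.prod (LinearMap.coprod (j k) (θ k))
        ((g k).comp (LinearMap.fst Λ (CX k) (BY k)))) := by
  have hfj : ∀ w, f k (j k w) = i k (g k w) :=
    fun w => (LinearMap.congr_fun (hig k) w).symm
  have hfθ' : ∀ b, f k (θ k b) = b := fun b => LinearMap.congr_fun (hfθ k) b
  have hgη' : ∀ c, g k (η k c) = c := fun c => LinearMap.congr_fun (hgη k) c
  have hjη' : ∀ c, j k (η k c) = θ k (i k c) := fun c => LinearMap.congr_fun (hjη k) c
  have hsθ' : ∀ b, sX k (θ k b) = sY k b := fun b => LinearMap.congr_fun (hsθ k) b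
  have hsf' : ∀ x, sY k (f k x) = sX k x := fun x => LinearMap.congr_fun (hsf k) x
  have hgd' : ∀ u, g k (dX k u) = dY k u := fun u => LinearMap.congr_fun (hgd k) u
  have hsθ1 : ∀ b : BY (k+1), sX (k+1) (θ (k+1) b) = sY (k+1) b :=
    fun b => LinearMap.congr_fun (hsθ (k+1)) b
  constructor
  · rw [injective_iff_map_eq_zero]
    rintro ⟨w, y⟩ h
    rw [Prod.ext_iff] at h
    obtain ⟨h1, h2⟩ := h
    simp only [LinearMap.prod_apply, Function.prod, LinearMap.coprod_apply,
      LinearMap.comp_apply, LinearMap.fst_apply, Prod.fst_zero, Prod.snd_zero]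
      at h1 h2
    have hy : y = 0 := by
      have := congrArg (f k) h1
      rw [map_add, map_zero, hfj, hfθ', h2, map_zero, zero_add] at this
      exact this
    subst hy
    rw [map_zero, add_zero] at h1
    obtain ⟨u, hu⟩ := ((hXex₁ k) w).mp h1
    have hdYu : dY k u = 0 := by rw [← hgd', hu, h2]
    obtain ⟨v, hv⟩ := ((hYex₃ k) u).mp hdYu
    have hw : w = 0 := by
      rw [← hu, ← hv, ← hsθ1 v, (hXex₃ k).apply_apply_eq_zero]
    simp [hw]
  · rintro ⟨x, z⟩
    set x' := x - θ k (i k z) with hx'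
    set r := x' - θ k (f k x') with hr
    have hsXr : sX k r = 0 := by
      rw [hr, map_sub, hsθ', hsf', sub_self]
    obtain ⟨w₂, hw₂⟩ := ((hXex₂ k) r).mp hsXr
    have hiz : i k (g k w₂) = 0 := by
      rw [← hfj, hw₂, hr, map_sub, hfθ', sub_self]
    obtain ⟨u, hu⟩ := ((hYex₁ k) _).mp hiz
    refine ⟨⟨η k z + w₂ - dX k u, f k x'⟩, ?_⟩
    have hgw : g k (η k z + w₂ - dX k u) = z := by
      rw [map_sub, map_add, hgη', hgd', hu]; abel
    have hjw : j k (η k z + w₂ - dX k u) + θ k (f k x') = x := by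
      rw [map_sub, map_add, hjη', hw₂, (hXex₁ k).apply_apply_eq_zero, sub_zero, hr, hx']
      abel
    simp only [LinearMap.prod_apply, Function.prod, LinearMap.coprod_apply,
      LinearMap.comp_apply, LinearMap.fst_apply, hgw, hjw]
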